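/- Let Ω ⊆ ℂ be open and let P : Ω → Matrix (n×n, ℂ) be twice continuously differentiable (as a map of two real variables) with P(ξ) hermitian for every ξ ∈ Ω. Set K = [∂̄P, P]. Then Kᴴ = −[∂P, P] pointwise, and the conservation-law expression satisfies ∂K − ∂̄(Kᴴ) = 2·[∂∂̄P, P] on Ω. In particular, P satisfies the equation [∂∂̄P, P] = 0 if and only if ∂[∂̄P, P] + ∂̄[∂P, P] = 0. -/

import Mathlib

open Matrix

attribute [local instance] Matrix.frobeniusNormedAddCommGroup Matrix.frobeniusNormedSpace

/-- The Wirtinger derivative `∂F(ξ) = (1/2)(DF(ξ)(1) − i·DF(ξ)(i))`. -/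
noncomputable def wd {E : Type*} [NormedAddCommGroup E] [NormedSpace ℂ E]
    (F : ℂ → E) (ξ : ℂ) : E :=
  (2 : ℂ)⁻¹ • (fderiv ℝ F ξ 1 - Complex.I • fderiv ℝ F ξ Complex.I)

/-- The Wirtinger derivative `∂̄F(ξ) = (1/2)(DF(ξ)(1) + i·DF(ξ)(i))`. -/
noncomputable def wdbar {E : Type*} [NormedAddCommGroup E] [NormedSpace ℂ E]
    (F : ℂ → E) (ξ : ℂ) : E :=
  (2 : ℂ)⁻¹ • (fderiv ℝ F ξ 1 + Complex.I • fderiv ℝ F ξ Complex.I)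

/- ### Auxiliary material -/

attribute [local instance] Matrix.frobeniusNormedRing Matrix.frobeniusNormedAlgebra

section generic

variable {E : Type*} [NormedAddCommGroup E] [NormedSpace ℂ E] {F G : ℂ → E} {ξ : ℂ}

lemma wd_congr (h : F =ᶠ[nhds ξ] G) : wd F ξ = wd G ξ := by
  unfold wd; rw [h.fderiv_eq]

lemma wdbar_congr (h : F =ᶠ[nhds ξ] G) : wdbar F ξ = wdbar G ξ := by
  unfold wdbar; rw [h.fderiv_eq]

lemma wd_neg : wd (fun z => -F z) ξ = -wd F ξ := by
  simp only [wd, fderiv_fun_neg, ContinuousLinearMap.neg_apply]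
  module

lemma wdbar_neg : wdbar (fun z => -F z) ξ = -wdbar F ξ := by
  simp only [wdbar, fderiv_fun_neg, ContinuousLinearMap.neg_apply]
  module

lemma wd_add (hF : DifferentiableAt ℝ F ξ) (hG : DifferentiableAt ℝ G ξ) :
    wd (fun z => F z + G z) ξ = wd F ξ + wd G ξ := by
  simp only [wd, fderiv_fun_add hF hG, ContinuousLinearMap.add_apply]
  module

lemma wdbar_add (hF : DifferentiableAt ℝ F ξ) (hG : DifferentiableAt ℝ G ξ) :
    wdbar (fun z => F z + G z) ξ = wdbar F ξ + wdbar G ξ := by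
  simp only [wdbar, fderiv_fun_add hF hG, ContinuousLinearMap.add_apply]
  module

lemma wd_sub (hF : DifferentiableAt ℝ F ξ) (hG : DifferentiableAt ℝ G ξ) :
    wd (fun z => F z - G z) ξ = wd F ξ - wd G ξ := by
  simp only [wd, fderiv_fun_sub hF hG, ContinuousLinearMap.sub_apply]
  module

lemma wdbar_sub (hF : DifferentiableAt ℝ F ξ) (hG : DifferentiableAt ℝ G ξ) :
    wdbar (fun z => F z - G z) ξ = wdbar F ξ - wdbar G ξ := by
  simp only [wdbar, fderiv_fun_sub hF hG, ContinuousLinearMap.sub_apply]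
  module

lemma wd_csmul (c : ℂ) (hF : DifferentiableAt ℝ F ξ) :
    wd (fun z => c • F z) ξ = c • wd F ξ := by
  simp only [wd, fderiv_fun_const_smul hF c, ContinuousLinearMap.smul_apply]
  module

lemma wdbar_csmul (c : ℂ) (hF : DifferentiableAt ℝ F ξ) :
    wdbar (fun z => c • F z) ξ = c • wdbar F ξ := by
  simp only [wdbar, fderiv_fun_const_smul hF c, ContinuousLinearMap.smul_apply]
  module

end generic

section matrixStuff

variable {n : ℕ} {F G : ℂ → Matrix (Fin n) (Fin n) ℂ} {ξ : ℂ}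

lemma wd_mul (hF : DifferentiableAt ℝ F ξ) (hG : DifferentiableAt ℝ G ξ) :
    wd (fun z => F z * G z) ξ = wd F ξ * G ξ + F ξ * wd G ξ := by
  simp only [wd, fderiv_fun_mul' hF hG, ContinuousLinearMap.add_apply,
    ContinuousLinearMap.smul_apply, ContinuousLinearMap.smulRight_apply, smul_eq_mul, op_smul_eq_mul]
  simp only [sub_mul, mul_sub, add_mul, mul_add, smul_mul_assoc, mul_smul_comm,
    smul_sub, smul_add, smul_smul]
  module

lemma wdbar_mul (hF : DifferentiableAt ℝ F ξ) (hG : DifferentiableAt ℝ G ξ) :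
    wdbar (fun z => F z * G z) ξ = wdbar F ξ * G ξ + F ξ * wdbar G ξ := by
  simp only [wdbar, fderiv_fun_mul' hF hG, ContinuousLinearMap.add_apply,
    ContinuousLinearMap.smul_apply, ContinuousLinearMap.smulRight_apply, smul_eq_mul, op_smul_eq_mul]
  simp only [sub_mul, mul_sub, add_mul, mul_add, smul_mul_assoc, mul_smul_comm,
    smul_sub, smul_add, smul_smul]
  module

/-- Conjugate transpose as a continuous `ℝ`-linear map (w.r.t. the Frobenius norm). -/
noncomputable def ctL (n : ℕ) :
    Matrix (Fin n) (Fin n) ℂ →L[ℝ] Matrix (Fin n) (Fin n) ℂ :=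
  LinearMap.mkContinuous
    { toFun := fun A => Aᴴ
      map_add' := fun A B => conjTranspose_add A B
      map_smul' := fun r A => by simp [conjTranspose_smul] }
    1 (fun A => by simp only [one_mul]; exact (Matrix.frobenius_norm_conjTranspose A).le)

lemma fderiv_ct (hF : DifferentiableAt ℝ F ξ) (v : ℂ) :
    fderiv ℝ (fun z => (F z)ᴴ) ξ v = (fderiv ℝ F ξ v)ᴴ := by
  have h : HasFDerivAt (fun z => (F z)ᴴ) ((ctL n).comp (fderiv ℝ F ξ)) ξ :=
    ((ctL n).hasFDerivAt).comp ξ hF.hasFDerivAt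
  rw [h.fderiv]; rfl

end matrixStuff

/-- The key computation: symmetry of the mixed Wirtinger derivatives and the
conservation-law identity. -/
lemma key_calc {n : ℕ} (Ω : Set ℂ) (hΩ : IsOpen Ω)
    (P : ℂ → Matrix (Fin n) (Fin n) ℂ) (hP : ContDiffOn ℝ 2 P Ω)
    {ξ : ℂ} (hξ : ξ ∈ Ω) :
    wd (fun z => wdbar P z * P z - P z * wdbar P z) ξ
      + wdbar (fun z => wd P z * P z - P z * wd P z) ξ
    = 2 • (wd (fun z => wdbar P z) ξ * P ξ - P ξ * wd (fun z => wdbar P z) ξ) := by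
  have hmem : Ω ∈ nhds ξ := hΩ.mem_nhds hξ
  have hPd : DifferentiableAt ℝ P ξ := (hP.contDiffAt hmem).differentiableAt two_ne_zero
  have hQ := hP.fderiv_of_isOpen hΩ (m := 1) (by norm_num)
  have hQd : DifferentiableAt ℝ (fun z => fderiv ℝ P z) ξ :=
    (hQ.contDiffAt hmem).differentiableAt one_ne_zero
  set f2 : ℂ →L[ℝ] ℂ →L[ℝ] Matrix (Fin n) (Fin n) ℂ :=
    fderiv ℝ (fun z => fderiv ℝ P z) ξ with hf2def
  have happ : ∀ v : ℂ, DifferentiableAt ℝ (fun z => fderiv ℝ P z v) ξ := fun v =>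
    (ContinuousLinearMap.apply ℝ (Matrix (Fin n) (Fin n) ℂ) v).differentiableAt.comp ξ hQd
  have hf2 : ∀ v w : ℂ, fderiv ℝ (fun z => fderiv ℝ P z v) ξ w = f2 w v := by
    intro v w
    have h : HasFDerivAt (fun z => fderiv ℝ P z v)
        ((ContinuousLinearMap.apply ℝ (Matrix (Fin n) (Fin n) ℂ) v).comp f2) ξ :=
      (ContinuousLinearMap.apply ℝ (Matrix (Fin n) (Fin n) ℂ) v).hasFDerivAt.comp ξ
        hQd.hasFDerivAt
    exact congrArg (fun L : ℂ →L[ℝ] Matrix (Fin n) (Fin n) ℂ => L w) h.fderiv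
  have hsymm : f2 1 Complex.I = f2 Complex.I 1 :=
    ((hP.contDiffAt hmem).isSymmSndFDerivAt (by simp)).eq 1 Complex.I
  -- differentiability of the Wirtinger derivatives
  have hA : DifferentiableAt ℝ (fun z => fderiv ℝ P z 1) ξ := happ 1
  have hB : DifferentiableAt ℝ (fun z => fderiv ℝ P z Complex.I) ξ := happ Complex.I
  have hwb : DifferentiableAt ℝ (fun z => wdbar P z) ξ := by
    simp only [wdbar]
    exact (hA.fun_add (hB.fun_const_smul Complex.I)).fun_const_smul _
  have hwd : DifferentiableAt ℝ (fun z => wd P z) ξ := by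
    simp only [wd]
    exact (hA.fun_sub (hB.fun_const_smul Complex.I)).fun_const_smul _
  -- the mixed second Wirtinger derivatives agree
  have hwdA : wd (fun z => fderiv ℝ P z 1) ξ
      = (2 : ℂ)⁻¹ • (f2 1 1 - Complex.I • f2 Complex.I 1) := by
    simp only [wd]; erw [hf2, hf2]
  have hwdB : wd (fun z => fderiv ℝ P z Complex.I) ξ
      = (2 : ℂ)⁻¹ • (f2 1 Complex.I - Complex.I • f2 Complex.I Complex.I) := by
    simp only [wd]; erw [hf2, hf2]
  have hwbA : wdbar (fun z => fderiv ℝ P z 1) ξ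
      = (2 : ℂ)⁻¹ • (f2 1 1 + Complex.I • f2 Complex.I 1) := by
    simp only [wdbar]; erw [hf2, hf2]
  have hwbB : wdbar (fun z => fderiv ℝ P z Complex.I) ξ
      = (2 : ℂ)⁻¹ • (f2 1 Complex.I + Complex.I • f2 Complex.I Complex.I) := by
    simp only [wdbar]; erw [hf2, hf2]
  have e1 : wd (fun z => wdbar P z) ξ
      = (2 : ℂ)⁻¹ • (wd (fun z => fderiv ℝ P z 1) ξ
          + Complex.I • wd (fun z => fderiv ℝ P z Complex.I) ξ) := by
    have h1 : wd (fun z => wdbar P z) ξ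
        = (2 : ℂ)⁻¹ • wd (fun z => fderiv ℝ P z 1 + Complex.I • fderiv ℝ P z Complex.I) ξ :=
      wd_csmul _ (hA.fun_add (hB.fun_const_smul Complex.I))
    rw [h1, wd_add hA (hB.fun_const_smul Complex.I), wd_csmul Complex.I hB]
  have e2 : wdbar (fun z => wd P z) ξ
      = (2 : ℂ)⁻¹ • (wdbar (fun z => fderiv ℝ P z 1) ξ
          - Complex.I • wdbar (fun z => fderiv ℝ P z Complex.I) ξ) := by
    have h1 : wdbar (fun z => wd P z) ξ
        = (2 : ℂ)⁻¹ • wdbar (fun z => fderiv ℝ P z 1 - Complex.I • fderiv ℝ P z Complex.I) ξ :=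
      wdbar_csmul _ (hA.fun_sub (hB.fun_const_smul Complex.I))
    rw [h1, wdbar_sub hA (hB.fun_const_smul Complex.I), wdbar_csmul Complex.I hB]
  have hmixed : wdbar (fun z => wd P z) ξ = wd (fun z => wdbar P z) ξ := by
    rw [e1, e2, hwdA, hwdB, hwbA, hwbB, hsymm]
    module
  -- now expand the products
  rw [wd_sub (hwb.fun_mul hPd) (hPd.fun_mul hwb), wdbar_sub (hwd.fun_mul hPd) (hPd.fun_mul hwd),
    wd_mul hwb hPd, wd_mul hPd hwb, wdbar_mul hwd hPd, wdbar_mul hPd hwd, hmixed,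
    two_smul]
  abel

/-- For a twice continuously differentiable hermitian-valued `P` on an open `Ω ⊆ ℂ` and
`K = [∂̄P, P]`: `Kᴴ = −[∂P, P]`, `∂K − ∂̄(Kᴴ) = 2[∂∂̄P, P]`, and `[∂∂̄P, P] = 0` on `Ω`
iff `∂[∂̄P, P] + ∂̄[∂P, P] = 0` on `Ω`. -/
theorem conservation_law_equiv {n : ℕ} (Ω : Set ℂ) (hΩ : IsOpen Ω)
    (P : ℂ → Matrix (Fin n) (Fin n) ℂ) (hP : ContDiffOn ℝ 2 P Ω)
    (hherm : ∀ ξ ∈ Ω, (P ξ)ᴴ = P ξ)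
    (K : ℂ → Matrix (Fin n) (Fin n) ℂ)
    (hK : K = fun ξ => wdbar P ξ * P ξ - P ξ * wdbar P ξ) :
    (∀ ξ ∈ Ω, (K ξ)ᴴ = -(wd P ξ * P ξ - P ξ * wd P ξ)) ∧
    (∀ ξ ∈ Ω, wd K ξ - wdbar (fun z => (K z)ᴴ) ξ
        = 2 • (wd (fun z => wdbar P z) ξ * P ξ - P ξ * wd (fun z => wdbar P z) ξ)) ∧
    ((∀ ξ ∈ Ω, wd (fun z => wdbar P z) ξ * P ξ - P ξ * wd (fun z => wdbar P z) ξ = 0) ↔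
      (∀ ξ ∈ Ω, wd (fun z => wdbar P z * P z - P z * wdbar P z) ξ
          + wdbar (fun z => wd P z * P z - P z * wd P z) ξ = 0)) := by
  subst hK
  -- hermiticity of the derivative and part 1
  have h1 : ∀ ξ ∈ Ω,
      ((fun ξ => wdbar P ξ * P ξ - P ξ * wdbar P ξ) ξ)ᴴ
        = -(wd P ξ * P ξ - P ξ * wd P ξ) := by
    intro ξ hξ
    have hmem : Ω ∈ nhds ξ := hΩ.mem_nhds hξ
    have hPd : DifferentiableAt ℝ P ξ := (hP.contDiffAt hmem).differentiableAt two_ne_zero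
    have hev : (fun z => (P z)ᴴ) =ᶠ[nhds ξ] P :=
      Filter.eventually_of_mem hmem fun z hz => hherm z hz
    have hD : ∀ v : ℂ, (fderiv ℝ P ξ v)ᴴ = fderiv ℝ P ξ v := by
      intro v
      calc (fderiv ℝ P ξ v)ᴴ = fderiv ℝ (fun z => (P z)ᴴ) ξ v := (fderiv_ct hPd v).symm
        _ = fderiv ℝ P ξ v := by rw [hev.fderiv_eq]
    have hct : (wdbar P ξ)ᴴ = wd P ξ := by
      simp only [wdbar, wd, conjTranspose_smul, conjTranspose_add, hD, Complex.star_def,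
        map_inv₀, Complex.conj_ofNat, Complex.conj_I, neg_smul, ← sub_eq_add_neg]
      erw [hD, hD]
      rfl
    simp only [conjTranspose_sub, conjTranspose_mul, hherm ξ hξ, hct, neg_sub]
  refine ⟨h1, ?_, ?_⟩
  · intro ξ hξ
    have hcongr : wdbar (fun z => ((fun ξ => wdbar P ξ * P ξ - P ξ * wdbar P ξ) z)ᴴ) ξ
        = wdbar (fun z => -(wd P z * P z - P z * wd P z)) ξ :=
      wdbar_congr (Filter.eventually_of_mem (hΩ.mem_nhds hξ) fun z hz => h1 z hz)
    rw [hcongr, wdbar_neg, sub_neg_eq_add]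
    exact key_calc Ω hΩ P hP hξ
  · constructor
    · intro h ξ hξ
      rw [key_calc Ω hΩ P hP hξ, h ξ hξ, smul_zero]
    · intro h ξ hξ
      have h2 : (2 : ℕ) • (wd (fun z => wdbar P z) ξ * P ξ
          - P ξ * wd (fun z => wdbar P z) ξ) = 0 := by
        rw [← key_calc Ω hΩ P hP hξ]; exact h ξ hξ
      have h2' : (2 : ℂ) • (wd (fun z => wdbar P z) ξ * P ξ
          - P ξ * wd (fun z => wdbar P z) ξ) = 0 := by
        rw [show ((2 : ℂ)) = ((2 : ℕ) : ℂ) by norm_num, Nat.cast_smul_eq_nsmul]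
        exact h2
      have := smul_eq_zero.mp h2'
      simpa using this
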